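/- The code C of Construction 1 is MDS: for every subset S ⊆ {0, …, n−1} with |S| = k, the F-linear restriction map from C to (F^{(d−k+h)·s^n})^S sending a codeword c = (c_{i,b,a}) to ((c_{i,b,a})_{b,a})_{i ∈ S} is a bijection; in particular any k node contents determine the whole codeword and C has dimension k·N over F. -/

import Mathlib

open Finset

/-- The code `C` of Construction 1: arrays `c = (c_{i,b,a})` with `i ∈ [0,n)`,
`b` ranging over a `B`-element index set (`B = d-k+h`, `Fin B` standing for
`{1,…,d-k+h}`), and `a ∈ {0,…,s-1}^n`, satisfying the parity-check equations
`∑_i λ_i^t c_{i,b,a} + ∑_i δ(a_i) ∑_{e=1}^{s-1} μ_e^t c_{i,b,a(i,e)} = 0`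
for all `t ∈ [0,r)`, all `b`, and all `a`. -/
def codeC {F : Type*} [Field F] (n r s B : ℕ) (lam : Fin n → F) (mu : Fin s → F)
    (c : Fin n → Fin B → (Fin n → Fin s) → F) : Prop :=
  ∀ t < r, ∀ b : Fin B, ∀ a : Fin n → Fin s,
    ∑ i, lam i ^ t * c i b a
      + ∑ i, (if (a i : ℕ) = 0 then
          ∑ e ∈ univ.filter (fun e : Fin s => (e : ℕ) ≠ 0),
            mu e ^ t * c i b (Function.update a i e)
        else 0) = 0

/-- Vandermonde-type lemma: if `T` has `r` elements and
`∑_{i ∈ T} λ_i^t x_i = 0` for `t = 0, …, r-1`, with the `λ_i` distinct,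
then `x_i = 0` for all `i ∈ T`. -/
lemma vand_zero {F : Type*} [Field F] {n r : ℕ} {lam : Fin n → F}
    (hlam : Function.Injective lam) (T : Finset (Fin n)) (hT : T.card = r)
    (x : Fin n → F) (hx : ∀ t < r, ∑ i ∈ T, lam i ^ t * x i = 0) :
    ∀ i ∈ T, x i = 0 := by
  classical
  have hcard : Fintype.card {i // i ∈ T} = r := by
    rw [Fintype.card_coe, hT]
  let g : Fin r ≃ {i // i ∈ T} := (Fintype.equivFinOfCardEq hcard).symm
  have hvinj : Function.Injective fun j : Fin r => lam ((g j) : Fin n) :=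
    hlam.comp (Subtype.val_injective.comp g.injective)
  let M : Matrix (Fin r) (Fin r) F :=
    (Matrix.vandermonde fun j : Fin r => lam ((g j) : Fin n)).transpose
  have hdet : M.det ≠ 0 := by
    rw [Matrix.det_transpose]
    exact Matrix.det_vandermonde_ne_zero_iff.mpr hvinj
  have hmul : M.mulVec (fun j => x ((g j) : Fin n)) = 0 := by
    funext t
    have h1 : M.mulVec (fun j => x ((g j) : Fin n)) t
        = ∑ j : Fin r, lam ((g j) : Fin n) ^ (t : ℕ) * x ((g j) : Fin n) := by
      simp [M, Matrix.mulVec, dotProduct, Matrix.vandermonde,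
        Matrix.transpose_apply]
    have h2 : ∑ j : Fin r, lam ((g j) : Fin n) ^ (t : ℕ) * x ((g j) : Fin n)
        = ∑ i ∈ T, lam i ^ (t : ℕ) * x i := by
      rw [← Finset.sum_coe_sort T (fun i => lam i ^ (t : ℕ) * x i)]
      exact Fintype.sum_equiv g _ _ (fun j => rfl)
    rw [h1, h2, hx (t : ℕ) t.isLt]
    rfl
  have hz := Matrix.eq_zero_of_mulVec_eq_zero hdet hmul
  intro i hi
  have := congrFun hz (g.symm ⟨i, hi⟩)
  simpa [g] using this

/-- The parity-check map of Construction 1, as a linear map. -/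
def chk {F : Type*} [Field F] (n r s B : ℕ) (lam : Fin n → F) (mu : Fin s → F) :
    (Fin n → Fin B → (Fin n → Fin s) → F) →ₗ[F]
      (Fin r → Fin B → (Fin n → Fin s) → F) where
  toFun c := fun t b a =>
    ∑ i, lam i ^ (t : ℕ) * c i b a
      + ∑ i, (if (a i : ℕ) = 0 then
          ∑ e ∈ univ.filter (fun e : Fin s => (e : ℕ) ≠ 0),
            mu e ^ (t : ℕ) * c i b (Function.update a i e)
        else 0)
  map_add' c c' := by
    funext t b a
    simp only [Pi.add_apply, mul_add]
    rw [Finset.sum_add_distrib]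
    have key : ∀ i : Fin n,
        (if (a i : ℕ) = 0 then
          ∑ e ∈ univ.filter (fun e : Fin s => (e : ℕ) ≠ 0),
            (mu e ^ (t : ℕ) * c i b (Function.update a i e)
              + mu e ^ (t : ℕ) * c' i b (Function.update a i e)) else 0)
        = (if (a i : ℕ) = 0 then
            ∑ e ∈ univ.filter (fun e : Fin s => (e : ℕ) ≠ 0),
              mu e ^ (t : ℕ) * c i b (Function.update a i e) else 0)
          + (if (a i : ℕ) = 0 then
            ∑ e ∈ univ.filter (fun e : Fin s => (e : ℕ) ≠ 0),
              mu e ^ (t : ℕ) * c' i b (Function.update a i e) else 0) := by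
      intro i
      split_ifs with hcond
      · rw [Finset.sum_add_distrib]
      · rw [add_zero]
    rw [Finset.sum_congr rfl (fun i _ => key i), Finset.sum_add_distrib]
    ring
  map_smul' m c := by
    funext t b a
    simp only [Pi.smul_apply, smul_eq_mul, RingHom.id_apply]
    rw [mul_add, Finset.mul_sum, Finset.mul_sum]
    congr 1
    · exact Finset.sum_congr rfl fun i _ => by ring
    · refine Finset.sum_congr rfl fun i _ => ?_
      split_ifs with hcond
      · rw [Finset.mul_sum]
        exact Finset.sum_congr rfl fun e _ => by ring
      · rw [mul_zero]

/-- Injectivity: a codeword vanishing on the `k` nodes of `S` vanishes. -/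
lemma codeC_zero_of_vanish {F : Type*} [Field F] {n k r s B : ℕ} (hnk : n = k + r)
    {lam : Fin n → F} (hlam : Function.Injective lam) {mu : Fin s → F}
    (S : Finset (Fin n)) (hS : S.card = k)
    (c : Fin n → Fin B → (Fin n → Fin s) → F) (hc : codeC n r s B lam mu c)
    (h0 : ∀ i ∈ S, ∀ b a, c i b a = 0) : c = 0 := by
  classical
  have hTcard : Sᶜ.card = r := by
    rw [Finset.card_compl, hS]
    simp [hnk]
  have core : ∀ b : Fin B, ∀ a : Fin n → Fin s,
      (∀ j, j ∉ S → (a j : ℕ) = 0 → ∀ e : Fin s, (e : ℕ) ≠ 0 →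
        c j b (Function.update a j e) = 0) →
      ∀ i, c i b a = 0 := by
    intro b a hcross
    have hvand : ∀ t < r, ∑ i ∈ Sᶜ, lam i ^ t * c i b a = 0 := by
      intro t ht
      have heq := hc t ht b a
      have h1 : ∑ i, lam i ^ t * c i b a = ∑ i ∈ Sᶜ, lam i ^ t * c i b a := by
        rw [← Finset.sum_add_sum_compl S (fun i => lam i ^ t * c i b a),
          Finset.sum_eq_zero (fun i hi => by rw [h0 i hi, mul_zero]), zero_add]
      have h2 : ∑ i, (if (a i : ℕ) = 0 then
          ∑ e ∈ univ.filter (fun e : Fin s => (e : ℕ) ≠ 0),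
            mu e ^ t * c i b (Function.update a i e) else 0) = 0 := by
        refine Finset.sum_eq_zero fun i _ => ?_
        split_ifs with hai
        · refine Finset.sum_eq_zero fun e he => ?_
          by_cases hiS : i ∈ S
          · rw [h0 i hiS, mul_zero]
          · rw [hcross i hiS hai e (Finset.mem_filter.mp he).2, mul_zero]
        · rfl
      rw [h1, h2, add_zero] at heq
      exact heq
    intro i
    by_cases hiS : i ∈ S
    · exact h0 i hiS b a
    · exact vand_zero hlam Sᶜ hTcard _ hvand i (Finset.mem_compl.mpr hiS)
  have main : ∀ m : ℕ, ∀ b : Fin B, ∀ a : Fin n → Fin s,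
      (univ.filter fun j => j ∉ S ∧ (a j : ℕ) = 0).card ≤ m →
      ∀ i, c i b a = 0 := by
    intro m
    induction m with
    | zero =>
      intro b a ha i
      refine core b a (fun j hj hja e he => ?_) i
      exfalso
      have hmem : j ∈ univ.filter fun j => j ∉ S ∧ (a j : ℕ) = 0 :=
        Finset.mem_filter.mpr ⟨Finset.mem_univ j, hj, hja⟩
      have : (univ.filter fun j => j ∉ S ∧ (a j : ℕ) = 0) = ∅ :=
        Finset.card_eq_zero.mp (Nat.le_zero.mp ha)
      rw [this] at hmem
      exact absurd hmem (Finset.notMem_empty j)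
    | succ m ih =>
      intro b a ha i
      refine core b a (fun j hj hja e he => ?_) i
      refine ih b (Function.update a j e) ?_ j
      have hmem : j ∈ univ.filter fun j' => j' ∉ S ∧ (a j' : ℕ) = 0 :=
        Finset.mem_filter.mpr ⟨Finset.mem_univ j, hj, hja⟩
      have hfe : (univ.filter fun j' => j' ∉ S ∧ ((Function.update a j e j' : Fin s) : ℕ) = 0)
          = (univ.filter fun j' => j' ∉ S ∧ (a j' : ℕ) = 0).erase j := by
        ext j'
        simp only [Finset.mem_filter, Finset.mem_erase, Finset.mem_univ, true_and]
        constructor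
        · rintro ⟨hj'S, hj'0⟩
          have hne : j' ≠ j := by
            intro hEq
            subst hEq
            rw [Function.update_self] at hj'0
            exact he hj'0
          rw [Function.update_of_ne hne] at hj'0
          exact ⟨hne, hj'S, hj'0⟩
        · rintro ⟨hne, hj'S, hj'0⟩
          rw [Function.update_of_ne hne]
          exact ⟨hj'S, hj'0⟩
      rw [hfe, Finset.card_erase_of_mem hmem]
      omega
  funext i b a
  exact main _ b a le_rfl i

lemma finrank_fun3 (F : Type*) [Field F] (α β γ : Type*)
    [Fintype α] [Fintype β] [Fintype γ] :
    Module.finrank F (α → β → γ → F)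
      = Fintype.card α * (Fintype.card β * Fintype.card γ) := by
  have h2 : Module.finrank F (γ → F) = Fintype.card γ := Module.finrank_pi F
  have h1 : Module.finrank F (β → γ → F) = Fintype.card β * Fintype.card γ := by
    rw [Module.finrank_pi_fintype F]
    simp [h2, mul_comm]
  rw [Module.finrank_pi_fintype F]
  simp [h1, mul_comm]

/-- The code `C` of Construction 1 is MDS: for every `k`-subset `S` of the node
indices, the restriction map sending a codeword to its tuple of node contents on
`S` is a bijection. -/
theorem codeC_is_MDS {F : Type*} [Field F] [Fintype F]
    (n k d h r s N : ℕ) (hn : 0 < n) (hk0 : 0 < k) (hr0 : 0 < r) (hh : 1 ≤ h)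
    (hnk : n = k + r) (hkd : k < d) (hdn : d + h ≤ n)
    (hs : s = d - k + 1) (hN : N = (d - k + h) * s ^ n)
    (lam : Fin n → F) (mu : Fin s → F)
    (hlam : Function.Injective lam)
    (hmu : ∀ e e' : Fin s, (e : ℕ) ≠ 0 → (e' : ℕ) ≠ 0 → mu e = mu e' → e = e')
    (hlammu : ∀ (i : Fin n) (e : Fin s), (e : ℕ) ≠ 0 → lam i ≠ mu e)
    (S : Finset (Fin n)) (hS : S.card = k) :
    Function.Bijective
      (fun c : {c : Fin n → Fin (d - k + h) → (Fin n → Fin s) → F //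
          codeC n r s (d - k + h) lam mu c} =>
        fun i : S => c.1 i.1) := by
  classical
  set B := d - k + h with hB
  set ψ := chk (F := F) n r s B lam mu with hψ
  have hker : ∀ cc : Fin n → Fin B → (Fin n → Fin s) → F,
      codeC n r s B lam mu cc ↔ ψ cc = 0 := by
    intro cc
    constructor
    · intro hcc
      funext t b a
      simp only [Pi.zero_apply]
      exact hcc (t : ℕ) t.isLt b a
    · intro hcc t ht b a
      have h1 := congrFun (congrFun (congrFun hcc ⟨t, ht⟩) b) a
      simpa [ψ, chk] using h1
  set K := LinearMap.ker ψ with hK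
  let res : (Fin n → Fin B → (Fin n → Fin s) → F) →ₗ[F]
      (S → Fin B → (Fin n → Fin s) → F) :=
    LinearMap.funLeft F (Fin B → (Fin n → Fin s) → F) (fun i : S => (i : Fin n))
  let Φ : K →ₗ[F] (S → Fin B → (Fin n → Fin s) → F) := res.comp K.subtype
  have hΦinj : Function.Injective Φ := by
    rw [injective_iff_map_eq_zero]
    intro x hx
    have h0 : ∀ i ∈ S, ∀ b a, x.1 i b a = 0 := by
      intro i hi b a
      have := congrFun (congrFun (congrFun hx ⟨i, hi⟩) b) a
      simpa [Φ, res] using this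
    have hcx : codeC n r s B lam mu x.1 := (hker x.1).2 (LinearMap.mem_ker.mp x.2)
    exact Subtype.ext (codeC_zero_of_vanish hnk hlam S hS x.1 hcx h0)
  -- dimension count
  set X := B * s ^ n with hX
  have hcardA : Fintype.card (Fin n → Fin s) = s ^ n := by
    simp [Fintype.card_fun]
  have hV : Module.finrank F (Fin n → Fin B → (Fin n → Fin s) → F) = n * X := by
    rw [finrank_fun3]
    simp [hX, hcardA]
  have hW : Module.finrank F (Fin r → Fin B → (Fin n → Fin s) → F) = r * X := by
    rw [finrank_fun3]
    simp [hX, hcardA]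
  have hTgt : Module.finrank F (S → Fin B → (Fin n → Fin s) → F) = k * X := by
    rw [finrank_fun3]
    simp [hX, hcardA, Fintype.card_coe, hS]
  have hsum := LinearMap.finrank_range_add_finrank_ker ψ
  rw [hV] at hsum
  have hrle : Module.finrank F (LinearMap.range ψ) ≤ r * X := by
    rw [← hW]
    exact Submodule.finrank_le _
  have hnX : n * X = k * X + r * X := by rw [hnk, add_mul]
  rw [hnX] at hsum
  have hKge : k * X ≤ Module.finrank F K := by linarith
  have hKle : Module.finrank F K ≤ k * X := by
    have := LinearMap.finrank_le_finrank_of_injective hΦinj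
    rwa [hTgt] at this
  have hKeq : Module.finrank F K = k * X := le_antisymm hKle hKge
  have hrange : LinearMap.range Φ = ⊤ := by
    apply Submodule.eq_top_of_finrank_eq
    rw [LinearMap.finrank_range_of_inj hΦinj, hKeq, hTgt]
  have hΦsurj : Function.Surjective Φ := LinearMap.range_eq_top.mp hrange
  have hfinal : Function.Bijective (fun x : K => (fun i : S => x.1 i.1)) := by
    have hEq : (fun x : K => (fun i : S => x.1 i.1)) = ⇑Φ := rfl
    rw [hEq]
    exact ⟨hΦinj, hΦsurj⟩
  let E : {c : Fin n → Fin B → (Fin n → Fin s) → F //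
      codeC n r s B lam mu c} ≃ K :=
    { toFun := fun c => ⟨c.1, LinearMap.mem_ker.mpr ((hker c.1).1 c.2)⟩
      invFun := fun x => ⟨x.1, (hker x.1).2 (LinearMap.mem_ker.mp x.2)⟩
      left_inv := fun c => rfl
      right_inv := fun x => rfl }
  have hEq2 : (fun c : {c : Fin n → Fin B → (Fin n → Fin s) → F //
      codeC n r s B lam mu c} => fun i : S => c.1 i.1)
      = (fun x : K => (fun i : S => x.1 i.1)) ∘ E := rfl
  rw [hEq2]
  exact hfinal.comp E.bijective
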